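/- Let H be a strongly connected simple digraph, let k >= 1, and suppose every tournament not containing k vertex-disjoint topological minor copies of H has an interval decomposition of width at most p(k) = c*k for a constant c (depending on H). Then for every tournament T not containing k vertex-disjoint topological minor copies of H, there is a set of at most 2*c*k*log2(k) vertices (for k >= 2; 0 vertices for k = 1) intersecting all topological minor copies of H in T. -/

import Mathlib

/-- `A` is the arc relation of a tournament on `V`. -/
def IsTournament {V : Type} (A : V → V → Prop) : Prop :=
  (∀ v, ¬ A v v) ∧ ∀ u v, u ≠ v → (A u v ↔ ¬ A v u)

/-- `l` is a directed path (as a list of vertices, without repetitions) from `a` to `b`. -/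
def IsVertPath {V : Type} (A : V → V → Prop) (l : List V) (a b : V) : Prop :=
  List.Chain' A l ∧ l.head? = some a ∧ l.getLast? = some b ∧ l.Nodup

/-- The internal vertices of a path given as a list of vertices. -/
def internals {V : Type} (l : List V) : List V := (l.drop 1).dropLast

/-- `φ` (on vertices) together with vertex-lists `P` (paths for the arcs of `H`) form a
topological minor copy of the digraph `H` inside the digraph `A`: vertices map injectively,
each arc of `H` maps to a directed path between the images of its endpoints, the paths are
internally vertex-disjoint and their internal vertices avoid the images of vertices of `H`. -/
def IsTopMinorCopy {W V : Type} (H : W → W → Prop) (A : V → V → Prop)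
    (φ : W → V) (P : W → W → List V) : Prop :=
  Function.Injective φ ∧
  (∀ u v, H u v → IsVertPath A (P u v) (φ u) (φ v)) ∧
  (∀ u v, ¬ H u v → P u v = []) ∧
  (∀ u v, H u v → ∀ x ∈ internals (P u v), x ∉ Set.range φ) ∧
  (∀ u v u' v', H u v → H u' v' → (u, v) ≠ (u', v') →
    ∀ x ∈ internals (P u v), x ∉ P u' v')

/-- The vertices of a topological minor copy. -/
def tmVerts {W V : Type} (φ : W → V) (P : W → W → List V) : Set V :=
  Set.range φ ∪ {x | ∃ u v, x ∈ P u v}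

/-- `I` is an interval decomposition of the tournament with arc relation `A`: each vertex
gets a nonempty integer interval (given by its two endpoints), and whenever the interval of
`u` lies entirely to the left of the interval of `v`, the arc `(u,v)` is present. -/
def IsIntervalDecomp {V : Type} (A : V → V → Prop) (I : V → ℤ × ℤ) : Prop :=
  (∀ v, (I v).1 ≤ (I v).2) ∧ ∀ u v, (I u).2 < (I v).1 → A u v

/-- The `α`-cut of an interval decomposition: the vertices whose interval contains `α`. -/
def vcut {V : Type} (I : V → ℤ × ℤ) (α : ℤ) : Set V :=
  {v | (I v).1 ≤ α ∧ α ≤ (I v).2}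

/-- The digraph with arc relation `A` contains `k` pairwise vertex-disjoint topological
minor copies of `H`. -/
def HasTMPacking {W V : Type} (H : W → W → Prop) (A : V → V → Prop) (k : ℕ) : Prop :=
  ∃ (φs : Fin k → W → V) (Ps : Fin k → W → W → List V),
    (∀ t, IsTopMinorCopy H A (φs t) (Ps t)) ∧
    ∀ t t', t ≠ t' → Disjoint (tmVerts (φs t) (Ps t)) (tmVerts (φs t') (Ps t'))

-- helpers
private lemma mem_of_head?_eq {V : Type} {l : List V} {a : V} (h : l.head? = some a) : a ∈ l := by
  cases l with
  | nil => simp at h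
  | cons b t => simp at h; subst h; exact List.mem_cons_self

private lemma mem_of_getLast?_eq {V : Type} {l : List V} {a : V} (h : l.getLast? = some a) : a ∈ l := by
  have h' : a ∈ l.getLast? := by rw [h]; rfl
  obtain ⟨hne, rfl⟩ := List.mem_getLast?_eq_getLast h'
  exact List.getLast_mem hne

private lemma chain'_reach_last {V : Type} {T : V → V → Prop} {M : Set V} :
    ∀ l : List V, List.Chain' T l → (∀ z ∈ l, z ∈ M) →
    ∀ x ∈ l, ∀ g, l.getLast? = some g →
    Relation.ReflTransGen (fun a b => T a b ∧ b ∈ M) x g := by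
  intro l
  induction l with
  | nil => intro _ _ x hx; simp at hx
  | cons a t IH =>
    intro hc hmem x hx g hg
    cases t with
    | nil =>
      simp at hx hg; subst hx; subst hg; exact Relation.ReflTransGen.refl
    | cons b t' =>
      rw [List.Chain', List.isChain_cons_cons] at hc
      rw [List.getLast?_cons_cons] at hg
      have hmem' : ∀ z ∈ b :: t', z ∈ M := fun z hz => hmem z (List.mem_cons_of_mem _ hz)
      rcases List.mem_cons.mp hx with rfl | hx'
      · exact Relation.ReflTransGen.head ⟨hc.1, hmem b (by simp)⟩
          (IH hc.2 hmem' b (by simp) g hg)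
      · exact IH hc.2 hmem' x hx' g hg

private lemma chain'_reach_head {V : Type} {T : V → V → Prop} {M : Set V} :
    ∀ l : List V, List.Chain' T l → (∀ z ∈ l, z ∈ M) →
    ∀ h, l.head? = some h → ∀ x ∈ l,
    Relation.ReflTransGen (fun a b => T a b ∧ b ∈ M) h x := by
  intro l
  induction l with
  | nil => intro _ _ h hh x hx; simp at hx
  | cons a t IH =>
    intro hc hmem h hh x hx
    simp only [List.head?_cons, Option.some.injEq] at hh
    subst hh
    rcases List.mem_cons.mp hx with rfl | hx'
    · exact Relation.ReflTransGen.refl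
    · cases t with
      | nil => simp at hx'
      | cons b t' =>
        rw [List.Chain', List.isChain_cons_cons] at hc
        have hmem' : ∀ z ∈ b :: t', z ∈ M := fun z hz => hmem z (List.mem_cons_of_mem _ hz)
        exact Relation.ReflTransGen.head ⟨hc.1, hmem b (by simp)⟩
          (IH hc.2 hmem' b rfl x hx')

private lemma copy_reach {W V : Type} {H : W → W → Prop} {T : V → V → Prop}
    (hstrong : ∀ u v, Relation.ReflTransGen H u v)
    {φ : W → V} {P : W → W → List V} (hcopy : IsTopMinorCopy H T φ P) :
    ∀ x ∈ tmVerts φ P, ∀ y ∈ tmVerts φ P,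
      Relation.ReflTransGen (fun a b => T a b ∧ b ∈ tmVerts φ P) x y := by
  obtain ⟨hinj, hpath, hempty, -, -⟩ := hcopy
  set M := tmVerts φ P with hM
  have memP : ∀ u v, ∀ x ∈ P u v, x ∈ M := fun u v x hx => Or.inr ⟨u, v, hx⟩
  have r1 : ∀ u v, H u v → Relation.ReflTransGen (fun a b => T a b ∧ b ∈ M) (φ u) (φ v) := by
    intro u v huv
    obtain ⟨hc, hh, hg, -⟩ := hpath u v huv
    exact chain'_reach_last _ hc (memP u v) _ (mem_of_head?_eq hh) _ hg
  have r2 : ∀ u v, Relation.ReflTransGen (fun a b => T a b ∧ b ∈ M) (φ u) (φ v) := by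
    intro u v
    induction hstrong u v with
    | refl => exact Relation.ReflTransGen.refl
    | tail _ hbc IH2 => exact IH2.trans (r1 _ _ hbc)
  intro x hx y hy
  have r3a : ∃ w, Relation.ReflTransGen (fun a b => T a b ∧ b ∈ M) x (φ w) := by
    rcases hx with ⟨w, rfl⟩ | ⟨u, v, hxP⟩
    · exact ⟨w, Relation.ReflTransGen.refl⟩
    · by_cases huv : H u v
      · obtain ⟨hc, -, hg, -⟩ := hpath u v huv
        exact ⟨v, chain'_reach_last _ hc (memP u v) _ hxP _ hg⟩
      · rw [hempty u v huv] at hxP; simp at hxP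
  have r3b : ∃ w, Relation.ReflTransGen (fun a b => T a b ∧ b ∈ M) (φ w) y := by
    rcases hy with ⟨w, rfl⟩ | ⟨u, v, hyP⟩
    · exact ⟨w, Relation.ReflTransGen.refl⟩
    · by_cases huv : H u v
      · obtain ⟨hc, hh, -, -⟩ := hpath u v huv
        exact ⟨u, chain'_reach_head _ hc (memP u v) _ hh _ hyP⟩
      · rw [hempty u v huv] at hyP; simp at hyP
  obtain ⟨w, h1⟩ := r3a
  obtain ⟨w', h2⟩ := r3b
  exact h1.trans ((r2 w w').trans h2)

private lemma internals_map {V V' : Type} (f : V' → V) (l : List V') :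
    internals (l.map f) = (internals l).map f := by
  unfold internals
  rw [← List.map_drop, ← List.map_dropLast]

private lemma option_map_some_iff {V V' : Type} {f : V' → V} (hf : Function.Injective f)
    {o : Option V'} {a : V'} : o.map f = some (f a) ↔ o = some a := by
  cases o with
  | none => simp
  | some b => simp [hf.eq_iff]

private lemma vertpath_map {V V' : Type} {T : V → V → Prop} {T' : V' → V' → Prop}
    {f : V' → V} (hf : Function.Injective f) (hTT : ∀ a b, T' a b ↔ T (f a) (f b))
    (l : List V') (a b : V') :
    IsVertPath T' l a b ↔ IsVertPath T (l.map f) (f a) (f b) := by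
  unfold IsVertPath
  rw [List.Chain', List.Chain', List.isChain_map, List.head?_map, List.getLast?_map,
    option_map_some_iff hf, option_map_some_iff hf]
  constructor
  · rintro ⟨h1, h2, h3, h4⟩
    exact ⟨h1.imp (fun a b h => (hTT a b).mp h), h2, h3, h4.map hf⟩
  · rintro ⟨h1, h2, h3, h4⟩
    exact ⟨h1.imp (fun a b h => (hTT a b).mpr h), h2, h3, h4.of_map f⟩

private lemma tmVerts_map {W V V' : Type} (f : V' → V) (φ : W → V') (P : W → W → List V') :
    tmVerts (f ∘ φ) (fun u v => (P u v).map f) = f '' tmVerts φ P := by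
  unfold tmVerts
  rw [Set.image_union, Set.range_comp]
  congr 1
  ext x
  simp only [Set.mem_setOf_eq, List.mem_map, Set.mem_image]
  constructor
  · rintro ⟨u, v, y, hy, rfl⟩; exact ⟨y, ⟨u, v, hy⟩, rfl⟩
  · rintro ⟨y, ⟨u, v, hy⟩, rfl⟩; exact ⟨u, v, y, hy, rfl⟩

private lemma copy_map {W V V' : Type} (H : W → W → Prop) {T : V → V → Prop}
    {T' : V' → V' → Prop} {f : V' → V} (hf : Function.Injective f)
    (hTT : ∀ a b, T' a b ↔ T (f a) (f b)) (φ : W → V') (P : W → W → List V') :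
    IsTopMinorCopy H T' φ P ↔
      IsTopMinorCopy H T (f ∘ φ) (fun u v => (P u v).map f) := by
  unfold IsTopMinorCopy
  have hrng : ∀ x : V', f x ∈ Set.range (f ∘ φ) ↔ x ∈ Set.range φ := by
    intro x
    rw [Set.range_comp]
    constructor
    · rintro ⟨y, ⟨w, rfl⟩, hxy⟩; exact ⟨w, hf hxy⟩
    · rintro ⟨w, rfl⟩; exact ⟨φ w, ⟨w, rfl⟩, rfl⟩
  constructor
  · rintro ⟨h1, h2, h3, h4, h5⟩
    refine ⟨hf.comp h1, ?_, ?_, ?_, ?_⟩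
    · intro u v huv; exact (vertpath_map hf hTT _ _ _).mp (h2 u v huv)
    · intro u v huv; simp only; rw [h3 u v huv]; rfl
    · intro u v huv x hx
      rw [internals_map] at hx
      obtain ⟨y, hy, rfl⟩ := List.mem_map.mp hx
      rw [hrng]
      exact h4 u v huv y hy
    · intro u v u' v' huv huv' hne x hx hx'
      rw [internals_map] at hx
      obtain ⟨y, hy, rfl⟩ := List.mem_map.mp hx
      obtain ⟨z, hz, hzy⟩ := List.mem_map.mp hx'
      rw [hf hzy] at hz
      exact h5 u v u' v' huv huv' hne y hy hz
  · rintro ⟨h1, h2, h3, h4, h5⟩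
    refine ⟨fun a b hab => h1 (by simp [Function.comp, hab]), ?_, ?_, ?_, ?_⟩
    · intro u v huv; exact (vertpath_map hf hTT _ _ _).mpr (h2 u v huv)
    · intro u v huv
      have := h3 u v huv
      simpa using (List.map_eq_nil_iff.mp this)
    · intro u v huv x hx hxr
      refine h4 u v huv (f x) ?_ ((hrng x).mpr hxr)
      rw [internals_map]
      exact List.mem_map.mpr ⟨x, hx, rfl⟩
    · intro u v u' v' huv huv' hne x hx hx'
      refine h5 u v u' v' huv huv' hne (f x) ?_ (List.mem_map.mpr ⟨x, hx', rfl⟩)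
      rw [internals_map]
      exact List.mem_map.mpr ⟨x, hx, rfl⟩

private def PackIn {W V : Type} (H : W → W → Prop) (A : V → V → Prop) (U : Set V) (k : ℕ) : Prop :=
  ∃ (φs : Fin k → W → V) (Ps : Fin k → W → W → List V),
    (∀ t, IsTopMinorCopy H A (φs t) (Ps t) ∧ tmVerts (φs t) (Ps t) ⊆ U) ∧
    ∀ t t', t ≠ t' → Disjoint (tmVerts (φs t) (Ps t)) (tmVerts (φs t') (Ps t'))

private lemma packIn_combine {W V : Type} {H : W → W → Prop} {A : V → V → Prop}
    {U₁ U₂ : Set V} {k₁ k₂ : ℕ} (h1 : PackIn H A U₁ k₁) (h2 : PackIn H A U₂ k₂)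
    (hd : Disjoint U₁ U₂) : HasTMPacking H A (k₁ + k₂) := by
  obtain ⟨φ1, P1, hc1, hd1⟩ := h1
  obtain ⟨φ2, P2, hc2, hd2⟩ := h2
  refine ⟨Fin.addCases φ1 φ2, Fin.addCases P1 P2, ?_, ?_⟩
  · intro t
    induction t using Fin.addCases with
    | left i => simp only [Fin.addCases_left]; exact (hc1 i).1
    | right i => simp only [Fin.addCases_right]; exact (hc2 i).1
  · intro t t' hne
    induction t using Fin.addCases with
    | left i =>
      induction t' using Fin.addCases with
      | left j =>
        simp only [Fin.addCases_left]
        exact hd1 i j (fun h => hne (by rw [h]))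
      | right j =>
        simp only [Fin.addCases_left, Fin.addCases_right]
        exact hd.mono (hc1 i).2 (hc2 j).2
    | right i =>
      induction t' using Fin.addCases with
      | left j =>
        simp only [Fin.addCases_left, Fin.addCases_right]
        exact (hd.mono (hc1 j).2 (hc2 i).2).symm
      | right j =>
        simp only [Fin.addCases_right]
        exact hd2 i j (fun h => hne (by rw [h]))

private lemma packing_of_copy {W V : Type} {H : W → W → Prop} {A : V → V → Prop}
    {φ : W → V} {P : W → W → List V} (h : IsTopMinorCopy H A φ P) : HasTMPacking H A 1 :=
  ⟨fun _ => φ, fun _ => P, fun _ => h, fun t t' hne => absurd (Subsingleton.elim t t') hne⟩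

private lemma packing_of_isEmpty {W V : Type} [IsEmpty W] (H : W → W → Prop)
    (A : V → V → Prop) (k : ℕ) : HasTMPacking H A k := by
  refine ⟨fun _ w => isEmptyElim w, fun _ _ _ => [],
    fun t => ⟨fun a => isEmptyElim a, fun u => isEmptyElim u, fun u => isEmptyElim u,
      fun u => isEmptyElim u, fun u => isEmptyElim u⟩, ?_⟩
  intro t t' _
  rw [Set.disjoint_left]
  rintro x (⟨w, -⟩ | ⟨u, -, -⟩)
  · exact isEmptyElim w
  · exact isEmptyElim u

private lemma restrict_lemma {m n : ℕ} (H : Fin m → Fin m → Prop) (hm : 0 < m)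
    {T : Fin n → Fin n → Prop} (hT : IsTournament T) (U : Set (Fin n)) (j : ℕ) (F : ℝ)
    (hhit : ∀ (n' : ℕ) (T' : Fin n' → Fin n' → Prop), IsTournament T' →
      ¬ HasTMPacking H T' j →
      ∃ S' : Set (Fin n'), ((S'.ncard : ℝ) ≤ F) ∧
        ∀ φ P, IsTopMinorCopy H T' φ P → ∃ v ∈ S', v ∈ tmVerts φ P)
    (hnopack : ¬ PackIn H T U j) :
    ∃ S : Set (Fin n), ((S.ncard : ℝ) ≤ F) ∧
      ∀ φ P, IsTopMinorCopy H T φ P → tmVerts φ P ⊆ U → ∃ v ∈ S, v ∈ tmVerts φ P := by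
  classical
  haveI : Fintype ↥U := Set.Finite.fintype (Set.toFinite U)
  set n' := Fintype.card ↥U with hn'
  set e : ↥U ≃ Fin n' := Fintype.equivFin ↥U with he
  set f : Fin n' → Fin n := fun a => ((e.symm a : ↥U) : Fin n) with hfdef
  have hf : Function.Injective f := fun a b h => e.symm.injective (Subtype.ext h)
  have hrange : Set.range f = U := by
    ext x
    constructor
    · rintro ⟨a, rfl⟩; exact (e.symm a).2
    · intro hx; exact ⟨e ⟨x, hx⟩, by simp [hfdef]⟩
  set T' : Fin n' → Fin n' → Prop := fun a b => T (f a) (f b) with hT'def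
  have hTT : ∀ a b, T' a b ↔ T (f a) (f b) := fun _ _ => Iff.rfl
  have hT' : IsTournament T' :=
    ⟨fun v => hT.1 (f v), fun a b hab => hT.2 _ _ (fun h => hab (hf h))⟩
  have hnp' : ¬ HasTMPacking H T' j := by
    rintro ⟨φs, Ps, hcs, hds⟩
    apply hnopack
    refine ⟨fun t => f ∘ φs t, fun t u v => (Ps t u v).map f, fun t => ⟨?_, ?_⟩, ?_⟩
    · exact (copy_map H hf hTT (φs t) (Ps t)).mp (hcs t)
    · rw [tmVerts_map]
      rintro x ⟨y, -, rfl⟩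
      rw [← hrange]; exact ⟨y, rfl⟩
    · intro t t' h
      rw [tmVerts_map, tmVerts_map]
      exact (Set.disjoint_image_iff hf).mpr (hds t t' h)
  obtain ⟨S', hS'card, hS'hit⟩ := hhit n' T' hT' hnp'
  refine ⟨f '' S', by rwa [Set.ncard_image_of_injective _ hf], ?_⟩
  intro φ P hcopy hsub
  haveI hne : Nonempty (Fin n') := by
    have : φ ⟨0, hm⟩ ∈ Set.range f := by
      rw [hrange]; exact hsub (Or.inl ⟨⟨0, hm⟩, rfl⟩)
    obtain ⟨a, -⟩ := this
    exact ⟨a⟩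
  set g : Fin n → Fin n' := Function.invFun f with hgdef
  have hfg : ∀ x ∈ tmVerts φ P, f (g x) = x := by
    intro x hx
    apply Function.invFun_eq
    have : x ∈ Set.range f := by rw [hrange]; exact hsub hx
    exact this
  set φ' : Fin m → Fin n' := fun w => g (φ w) with hφ'def
  set P' : Fin m → Fin m → List (Fin n') := fun u v => (P u v).map g with hP'def
  have hφ : f ∘ φ' = φ := funext fun w => hfg (φ w) (Or.inl ⟨w, rfl⟩)
  have hP : (fun u v => (P' u v).map f) = P := by
    funext u v
    rw [hP'def, List.map_map]
    exact (List.map_congr_left fun a ha => hfg a (Or.inr ⟨u, v, ha⟩)).trans (List.map_id _)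
  have hcopy' : IsTopMinorCopy H T' φ' P' := by
    rw [copy_map H hf hTT φ' P', hφ, hP]
    exact hcopy
  obtain ⟨v', hv'S, hv'M⟩ := hS'hit φ' P' hcopy'
  refine ⟨f v', ⟨v', hv'S, rfl⟩, ?_⟩
  have hver : tmVerts (f ∘ φ') (fun u v => (P' u v).map f) = f '' tmVerts φ' P' :=
    tmVerts_map f φ' P'
  rw [hφ, hP] at hver
  rw [hver]
  exact ⟨v', hv'M, rfl⟩

private lemma copy_side {m n : ℕ} {H : Fin m → Fin m → Prop}
    (hstrong : ∀ u v, Relation.ReflTransGen H u v)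
    {T : Fin n → Fin n → Prop} (hT : IsTournament T) {I : Fin n → ℤ × ℤ}
    (hI : IsIntervalDecomp T I) (α : ℤ)
    {φ : Fin m → Fin n} {P : Fin m → Fin m → List (Fin n)}
    (hcopy : IsTopMinorCopy H T φ P)
    (hdisj : ∀ x ∈ tmVerts φ P, x ∉ vcut I α) :
    (∀ x ∈ tmVerts φ P, (I x).2 < α) ∨ (∀ x ∈ tmVerts φ P, α < (I x).1) := by
  have hside : ∀ x ∈ tmVerts φ P, (I x).2 < α ∨ α < (I x).1 := by
    intro x hx
    have h1 := hdisj x hx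
    have h2 := hI.1 x
    simp only [vcut, Set.mem_setOf_eq, not_and, not_le] at h1
    omega
  by_cases hR : ∃ y ∈ tmVerts φ P, α < (I y).1
  · right
    intro x hx
    obtain ⟨y, hy, hyR⟩ := hR
    have hreach := copy_reach hstrong hcopy y hy x hx
    have key : ∀ z, Relation.ReflTransGen (fun a b => T a b ∧ b ∈ tmVerts φ P) y z →
        α < (I z).1 := by
      intro z hz
      induction hz with
      | refl => exact hyR
      | @tail b c _ hstep IH =>
        rcases hside c hstep.2 with hcl | hcr
        · exfalso
          have harc : T c b := hI.2 c b (by omega)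
          have hbc : b ≠ c := by
            intro h; rw [h] at IH; have := hI.1 c; omega
          exact ((hT.2 b c hbc).mp hstep.1) harc
        · exact hcr
    exact key x hreach
  · left
    intro x hx
    push_neg at hR
    rcases hside x hx with h | h
    · exact h
    · exact absurd h (not_lt.mpr (hR x hx))

private lemma numeric_ineq (c : ℝ) (hc : 0 < c) (k k₁ k₂ : ℕ) (hk : 2 ≤ k)
    (hsum : k₁ + k₂ = k) (h1 : 1 ≤ k₁) (h2 : 1 ≤ k₂)
    (h31 : 3 * k₁ ≤ 2 * k) (h32 : 3 * k₂ ≤ 2 * k) :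
    c * k + 2 * c * k₁ * Real.logb 2 k₁ + 2 * c * k₂ * Real.logb 2 k₂ ≤
      2 * c * k * Real.logb 2 k := by
  have hlog32 : (1 : ℝ) / 2 ≤ Real.logb 2 (3 / 2) := by
    have h' : Real.logb 2 2 ≤ Real.logb 2 ((3 / 2 : ℝ) ^ 2) :=
      Real.logb_le_logb_of_le one_lt_two (by norm_num) (by norm_num)
    rw [Real.logb_pow, Real.logb_self_eq_one one_lt_two] at h'
    push_cast at h'
    linarith
  have key : ∀ j : ℕ, 1 ≤ j → 3 * j ≤ 2 * k →
      Real.logb 2 j ≤ Real.logb 2 k - 1 / 2 := by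
    intro j hj hjk
    have hjpos : (0 : ℝ) < j := by exact_mod_cast hj
    have hkpos : (0 : ℝ) < k := by
      have : (0 : ℕ) < k := by omega
      exact_mod_cast this
    have hle : (j : ℝ) ≤ 2 / 3 * k := by
      have h3 : (3 : ℝ) * j ≤ 2 * k := by exact_mod_cast hjk
      linarith
    have e1 : Real.logb 2 j ≤ Real.logb 2 (2 / 3 * k) :=
      Real.logb_le_logb_of_le one_lt_two hjpos hle
    have heq : (2 / 3 : ℝ) * k = (k : ℝ) / (3 / 2) := by ring
    rw [heq, Real.logb_div (ne_of_gt hkpos) (by norm_num)] at e1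
    linarith
  have b1 := key k₁ h1 h31
  have b2 := key k₂ h2 h32
  have hc1 : (0 : ℝ) ≤ 2 * c * k₁ := by positivity
  have hc2 : (0 : ℝ) ≤ 2 * c * k₂ := by positivity
  have e1 : 2 * c * (k₁ : ℝ) * Real.logb 2 k₁ ≤
      2 * c * (k₁ : ℝ) * (Real.logb 2 k - 1 / 2) := mul_le_mul_of_nonneg_left b1 hc1
  have e2 : 2 * c * (k₂ : ℝ) * Real.logb 2 k₂ ≤
      2 * c * (k₂ : ℝ) * (Real.logb 2 k - 1 / 2) := mul_le_mul_of_nonneg_left b2 hc2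
  have hcast : (k₁ : ℝ) + (k₂ : ℝ) = (k : ℝ) := by exact_mod_cast hsum
  have hfin : c * k + 2 * c * (k₁ : ℝ) * (Real.logb 2 k - 1 / 2) +
      2 * c * (k₂ : ℝ) * (Real.logb 2 k - 1 / 2) = 2 * c * k * Real.logb 2 k := by
    linear_combination (2 * c * Real.logb 2 (k : ℝ) - c) * hcast
  linarith

private lemma aux_main {m : ℕ} (H : Fin m → Fin m → Prop)
    (hstrong : ∀ u v, Relation.ReflTransGen H u v)
    (c : ℝ) (hc : 0 < c)
    (hhyp : ∀ (k : ℕ), 1 ≤ k → ∀ (n : ℕ) (T : Fin n → Fin n → Prop),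
      IsTournament T → ¬ HasTMPacking H T k →
      ∃ I : Fin n → ℤ × ℤ, IsIntervalDecomp T I ∧
        ∀ α : ℤ, ((vcut I α).ncard : ℝ) ≤ c * k) :
    ∀ (k : ℕ), 1 ≤ k → ∀ (n : ℕ) (T : Fin n → Fin n → Prop), IsTournament T →
      ¬ HasTMPacking H T k →
      ∃ S : Set (Fin n), ((S.ncard : ℝ) ≤ 2 * c * k * Real.logb 2 k) ∧
        ∀ φ P, IsTopMinorCopy H T φ P → ∃ v ∈ S, v ∈ tmVerts φ P := by
  intro k
  induction k using Nat.strong_induction_on with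
  | _ k IH =>
  intro hk n T hT hnopack
  have hm : 0 < m := by
    by_contra hm0
    have hmz : m = 0 := by omega
    subst hmz
    exact hnopack (packing_of_isEmpty H T k)
  rcases eq_or_lt_of_le hk with hk1 | hk2
  · refine ⟨∅, ?_, ?_⟩
    · rw [← hk1]
      simp [Real.logb_one]
    · intro φ P hcopy
      exfalso
      apply hnopack
      rw [← hk1]
      exact packing_of_copy hcopy
  · have hk2' : 2 ≤ k := hk2
    obtain ⟨I, hI, hwidth⟩ := hhyp k hk n T hT hnopack
    rcases Nat.eq_zero_or_pos n with hn0 | hn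
    · subst hn0
      refine ⟨∅, ?_, fun φ P _ => (φ ⟨0, hm⟩).elim0⟩
      simp only [Set.ncard_empty, Nat.cast_zero]
      have hl : (0 : ℝ) ≤ Real.logb 2 k :=
        Real.logb_nonneg one_lt_two (by exact_mod_cast hk)
      have : (0 : ℝ) ≤ 2 * c * k := by positivity
      exact mul_nonneg this hl
    · set k₁ := (k + 1) / 2 with hk₁def
      set k₂ := k / 2 with hk₂def
      have hsum : k₁ + k₂ = k := by omega
      have h11 : 1 ≤ k₁ := by omega
      have h12 : k₁ < k := by omega
      have h21 : 1 ≤ k₂ := by omega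
      have h22 : k₂ < k := by omega
      have h31 : 3 * k₁ ≤ 2 * k := by omega
      have h32 : 3 * k₂ ≤ 2 * k := by omega
      haveI : Nonempty (Fin n) := ⟨⟨0, hn⟩⟩
      have hex : ∃ α : ℤ, ¬ PackIn H T {v | (I v).2 < α} k₁ ∧
          ¬ PackIn H T {v | α < (I v).1} k₂ := by
        by_cases hB : ∃ α : ℤ, PackIn H T {v | (I v).2 < α} k₁
        · have hbdd : ∃ b : ℤ, ∀ z : ℤ, PackIn H T {v | (I v).2 < z} k₁ → b ≤ z := by
            refine ⟨Finset.univ.inf' Finset.univ_nonempty (fun v => (I v).1), ?_⟩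
            rintro z ⟨φs, Ps, hcs, -⟩
            have hv : φs ⟨0, by omega⟩ ⟨0, hm⟩ ∈ {v : Fin n | (I v).2 < z} :=
              (hcs ⟨0, by omega⟩).2 (Or.inl ⟨⟨0, hm⟩, rfl⟩)
            simp only [Set.mem_setOf_eq] at hv
            have h1 := hI.1 (φs ⟨0, by omega⟩ ⟨0, hm⟩)
            have h2 := Finset.inf'_le (fun v => (I v).1)
              (Finset.mem_univ (φs ⟨0, by omega⟩ ⟨0, hm⟩))
            omega
          obtain ⟨α₀, hα₀, hleast⟩ := Int.exists_least_of_bdd hbdd hB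
          refine ⟨α₀ - 1, fun h => ?_, fun h => ?_⟩
          · have := hleast _ h; omega
          · apply hnopack
            have hdisj : Disjoint {v : Fin n | (I v).2 < α₀}
                {v : Fin n | α₀ - 1 < (I v).1} := by
              rw [Set.disjoint_left]
              intro v h1 h2
              simp only [Set.mem_setOf_eq] at h1 h2
              have := hI.1 v
              omega
            have hcomb := packIn_combine hα₀ h hdisj
            rwa [hsum] at hcomb
        · push_neg at hB
          set β := Finset.univ.sup' Finset.univ_nonempty (fun v : Fin n => (I v).2) + 1 with hβdef
          refine ⟨β, hB β, ?_⟩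
          rintro ⟨φs, Ps, hcs, -⟩
          have hv : φs ⟨0, by omega⟩ ⟨0, hm⟩ ∈ {v : Fin n | β < (I v).1} :=
            (hcs ⟨0, by omega⟩).2 (Or.inl ⟨⟨0, hm⟩, rfl⟩)
          simp only [Set.mem_setOf_eq] at hv
          have h1 := hI.1 (φs ⟨0, by omega⟩ ⟨0, hm⟩)
          have h2 := Finset.le_sup' (fun v : Fin n => (I v).2)
            (Finset.mem_univ (φs ⟨0, by omega⟩ ⟨0, hm⟩))
          omega
      obtain ⟨α, hLα, hRα⟩ := hex
      obtain ⟨SL, hSLcard, hSLhit⟩ := restrict_lemma H hm hT {v | (I v).2 < α} k₁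
        (2 * c * k₁ * Real.logb 2 k₁)
        (fun n' T' hT' hnp => IH k₁ h12 h11 n' T' hT' hnp) hLα
      obtain ⟨SR, hSRcard, hSRhit⟩ := restrict_lemma H hm hT {v | α < (I v).1} k₂
        (2 * c * k₂ * Real.logb 2 k₂)
        (fun n' T' hT' hnp => IH k₂ h22 h21 n' T' hT' hnp) hRα
      refine ⟨vcut I α ∪ SL ∪ SR, ?_, ?_⟩
      · have u1 : (vcut I α ∪ SL ∪ SR).ncard ≤ (vcut I α ∪ SL).ncard + SR.ncard :=
          Set.ncard_union_le _ _
        have u2 : (vcut I α ∪ SL).ncard ≤ (vcut I α).ncard + SL.ncard :=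
          Set.ncard_union_le _ _
        have c1 : ((vcut I α ∪ SL ∪ SR).ncard : ℝ) ≤
            ((vcut I α).ncard : ℝ) + (SL.ncard : ℝ) + (SR.ncard : ℝ) := by
          have := u1.trans (Nat.add_le_add_right u2 _)
          exact_mod_cast this
        have hnum := numeric_ineq c hc k k₁ k₂ hk2' hsum h11 h21 h31 h32
        have hw := hwidth α
        linarith
      · intro φ P hcopy
        by_cases hcut : ∃ x ∈ tmVerts φ P, x ∈ vcut I α
        · obtain ⟨x, hx1, hx2⟩ := hcut
          exact ⟨x, Or.inl (Or.inl hx2), hx1⟩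
        · push_neg at hcut
          rcases copy_side hstrong hT hI α hcopy hcut with hL | hR
          · obtain ⟨v, hv1, hv2⟩ := hSLhit φ P hcopy (fun x hx => hL x hx)
            exact ⟨v, Or.inl (Or.inr hv1), hv2⟩
          · obtain ⟨v, hv1, hv2⟩ := hSRhit φ P hcopy (fun x hx => hR x hx)
            exact ⟨v, Or.inr hv1, hv2⟩


/-- Let `H` be a strongly connected simple digraph and suppose that for every `k ≥ 1`,
every tournament not containing `k` vertex-disjoint topological minor copies of `H` admits
an interval decomposition of width at most `c * k`. Then for every `k ≥ 1` and every
tournament `T` not containing `k` vertex-disjoint topological minor copies of `H`, there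
is a set of at most `2 c k log₂ k` vertices (for `k ≥ 2`; the empty set for `k = 1`)
intersecting all topological minor copies of `H` in `T`. -/
theorem stmt11 {m : ℕ} (H : Fin m → Fin m → Prop)
    (hsimple : ∀ v, ¬ H v v)
    (hstrong : ∀ u v, Relation.ReflTransGen H u v)
    (c : ℝ) (hc : 0 < c)
    (hhyp : ∀ (k : ℕ), 1 ≤ k → ∀ (n : ℕ) (T : Fin n → Fin n → Prop),
      IsTournament T → ¬ HasTMPacking H T k →
      ∃ I : Fin n → ℤ × ℤ, IsIntervalDecomp T I ∧
        ∀ α : ℤ, ((vcut I α).ncard : ℝ) ≤ c * k)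
    (k : ℕ) (hk : 1 ≤ k)
    (n : ℕ) (T : Fin n → Fin n → Prop) (hT : IsTournament T)
    (hnopack : ¬ HasTMPacking H T k) :
    ∃ S : Set (Fin n),
      (if k = 1 then S = ∅
        else (S.ncard : ℝ) ≤ 2 * c * k * Real.logb 2 k) ∧
      ∀ (φ : Fin m → Fin n) (P : Fin m → Fin m → List (Fin n)),
        IsTopMinorCopy H T φ P → ∃ v ∈ S, v ∈ tmVerts φ P := by
  rcases eq_or_ne k 1 with hk1 | hk1
  · subst hk1
    refine ⟨∅, by simp, ?_⟩
    intro φ P hcopy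
    exact absurd (packing_of_copy hcopy) hnopack
  · obtain ⟨S, h1, h2⟩ := aux_main H hstrong c hc hhyp k hk n T hT hnopack
    exact ⟨S, by rw [if_neg hk1]; exact h1, h2⟩
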